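/- For all integers n ≥ 2 and 2 ≤ d ≤ n, there exists a binary m×n covering array of strength d with m ≤ d·log₂(n) / log₂(2^d/(2^d−1)); consequently m*(n,d) ≤ d·log₂(n)/log₂(2^d/(2^d−1)). -/

import Mathlib

/-- `M` is `d`-decodable: every nonempty set of at most `d` columns contains a
row of weight exactly one. -/
def IsDecodable {m n : ℕ} (M : Fin m → Fin n → Bool) (d : ℕ) : Prop :=
  ∀ S : Finset (Fin n), S.Nonempty → S.card ≤ d →
    ∃ i : Fin m, (S.filter (fun j => M i j = true)).card = 1

/-- `m*(n,d)`: the minimum number of rows of a `d`-decodable binary matrix with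
`n` columns. -/
noncomputable def mStar (n d : ℕ) : ℕ :=
  sInf {m | ∃ M : Fin m → Fin n → Bool, IsDecodable M d}

/-- `M` is a binary covering array of strength `d`. -/
def IsCoveringArray {m n : ℕ} (M : Fin m → Fin n → Bool) (d : ℕ) : Prop :=
  ∀ f : Fin d → Fin n, Function.Injective f →
    ∀ v : Fin d → Bool, ∃ i : Fin m, ∀ s, M i (f s) = v s

namespace CAaux

open Finset

/-! ### Counting rows with prescribed values on a set of columns -/

def rowEqv {n : ℕ} (S T : Finset (Fin n)) :
    {w : Fin n → Bool // ∀ j ∈ S, w j = decide (j ∈ T)} ≃ ({j : Fin n // j ∉ S} → Bool) where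
  toFun w j := w.1 j.1
  invFun u := ⟨fun j => if h : j ∈ S then decide (j ∈ T) else u ⟨j, h⟩, fun j hj => dif_pos hj⟩
  left_inv w := by
    ext j
    by_cases h : j ∈ S
    · simp [h, w.2 j h]
    · simp [h]
  right_inv u := by
    ext j
    simp [j.2]

lemma card_rows_fixing {n : ℕ} (S T : Finset (Fin n)) :
    (Finset.univ.filter (fun w : Fin n → Bool => ∀ j ∈ S, w j = decide (j ∈ T))).card
      = 2 ^ (n - S.card) := by
  rw [← Fintype.card_subtype, Fintype.card_congr (rowEqv S T), Fintype.card_fun]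
  congr 1
  simp [Fintype.card_subtype_compl, Fintype.card_coe]

/-! ### Events -/

abbrev Event (n : ℕ) := Finset (Fin n) × Finset (Fin n)

def covers {n : ℕ} (w : Fin n → Bool) (e : Event n) : Prop :=
  ∀ j ∈ e.1, w j = decide (j ∈ e.2)

instance {n : ℕ} (w : Fin n → Bool) : DecidablePred (covers w) := fun e => by
  unfold covers; infer_instance

def allEvents (n d : ℕ) : Finset (Event n) :=
  (Finset.univ.powersetCard d).biUnion (fun S => S.powerset.image (fun T => (S, T)))

lemma mem_allEvents {n d : ℕ} {e : Event n} :
    e ∈ allEvents n d ↔ e.1.card = d ∧ e.2 ⊆ e.1 := by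
  obtain ⟨S, T⟩ := e
  simp only [allEvents, mem_biUnion, mem_image, mem_powersetCard, mem_powerset]
  constructor
  · rintro ⟨S', ⟨-, hc⟩, T', hT', h⟩
    obtain ⟨rfl, rfl⟩ : S' = S ∧ T' = T := by simpa [Prod.ext_iff] using h
    exact ⟨hc, hT'⟩
  · rintro ⟨hc, hT⟩
    exact ⟨S, ⟨subset_univ _, hc⟩, T, hT, rfl⟩

lemma card_allEvents {n d : ℕ} : (allEvents n d).card = n.choose d * 2 ^ d := by
  rw [allEvents, card_biUnion]
  · have : ∀ S ∈ Finset.univ.powersetCard d,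
        (S.powerset.image (fun T => ((S, T) : Event n))).card = 2 ^ d := by
      intro S hS
      rw [card_image_of_injective _ (fun a b h => by simpa [Prod.ext_iff] using h)]
      rw [card_powerset, (mem_powersetCard.mp hS).2]
    rw [Finset.sum_congr rfl this, sum_const, card_powersetCard, card_univ, Fintype.card_fin,
      smul_eq_mul]
  · intro S hS S' hS' hne
    simp only [disjoint_left, mem_image]
    rintro e ⟨T, hT, rfl⟩ ⟨T', hT', h⟩
    exact hne (congrArg Prod.fst h).symm

/-! ### The greedy step -/

lemma greedy_step {n d : ℕ} (hdn : d ≤ n) (E : Finset (Event n))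
    (hE : E ⊆ allEvents n d) :
    ∃ w : Fin n → Bool,
      2 ^ d * (E.filter (fun e => ¬ covers w e)).card ≤ (2 ^ d - 1) * E.card := by
  have key : ∑ w : Fin n → Bool, (E.filter (fun e => covers w e)).card
      = E.card * 2 ^ (n - d) := by
    have : ∀ w : Fin n → Bool, (E.filter (fun e => covers w e)).card
        = ∑ e ∈ E, if covers w e then 1 else 0 := fun w => card_filter _ _
    rw [Finset.sum_congr rfl (fun w _ => this w), Finset.sum_comm]
    have : ∀ e ∈ E, (∑ w : Fin n → Bool, if covers w e then 1 else 0) = 2 ^ (n - d) := by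
      intro e he
      rw [← card_filter]
      have hc := (mem_allEvents.mp (hE he)).1
      have := card_rows_fixing e.1 e.2
      rw [hc] at this
      exact this
    rw [Finset.sum_congr rfl this, sum_const, smul_eq_mul]
  have hex : ∃ w : Fin n → Bool, E.card ≤ 2 ^ d * (E.filter (fun e => covers w e)).card := by
    by_contra hcon
    push_neg at hcon
    have hlt : ∀ w : Fin n → Bool, 2 ^ d * (E.filter (fun e => covers w e)).card + 1 ≤ E.card :=
      fun w => hcon w
    have hsum : ∑ w : Fin n → Bool, (2 ^ d * (E.filter (fun e => covers w e)).card + 1)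
        ≤ ∑ _w : Fin n → Bool, E.card := Finset.sum_le_sum (fun w _ => hlt w)
    rw [Finset.sum_add_distrib, ← Finset.mul_sum, key, sum_const, sum_const, smul_eq_mul,
      smul_eq_mul, card_univ] at hsum
    have hcard : Fintype.card (Fin n → Bool) = 2 ^ n := by simp
    rw [hcard] at hsum
    have heq : 2 ^ d * (E.card * 2 ^ (n - d)) = 2 ^ n * E.card := by
      rw [← mul_assoc, mul_comm (2^d) E.card, mul_assoc, ← pow_add]
      rw [Nat.add_sub_cancel' hdn, mul_comm]
    rw [heq, mul_one] at hsum
    have h2n : 0 < 2 ^ n := Nat.two_pow_pos n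
    generalize 2 ^ n * E.card = x at hsum
    omega
  obtain ⟨w, hw⟩ := hex
  refine ⟨w, ?_⟩
  have hsplit : (E.filter (fun e => ¬ covers w e)).card
      = E.card - (E.filter (fun e => covers w e)).card := by
    rw [Finset.filter_not, card_sdiff_of_subset (filter_subset _ _)]
  rw [hsplit]
  have hle : (E.filter (fun e => covers w e)).card ≤ E.card := card_filter_le _ _
  have h2 : 1 ≤ 2 ^ d := Nat.one_le_two_pow
  have e1 : 2 ^ d * (E.card - (E.filter (fun e => covers w e)).card)
      = 2 ^ d * E.card - 2 ^ d * (E.filter (fun e => covers w e)).card := Nat.mul_sub _ _ _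
  have e2 : (2 ^ d - 1) * E.card = 2 ^ d * E.card - E.card := by
    rw [Nat.sub_mul, one_mul]
  rw [e1, e2]
  exact Nat.sub_le_sub_left hw _

lemma cover_one {n d : ℕ} (e : Event n) :
    covers (fun j => decide (j ∈ e.2)) e := fun j _ => rfl

/-- Phase 2: few events can be covered one at a time. -/
lemma cover_by_card {n d : ℕ} :
    ∀ k : ℕ, ∀ E : Finset (Event n), E.card ≤ k →
      ∃ L : List (Fin n → Bool), L.length ≤ k ∧ ∀ e ∈ E, ∃ w ∈ L, covers w e := by
  intro k
  induction k with
  | zero =>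
    intro E hE
    refine ⟨[], le_refl _, fun e he => absurd he ?_⟩
    rw [Nat.le_zero, card_eq_zero] at hE
    simp [hE]
  | succ k ih =>
    intro E hE
    rcases E.eq_empty_or_nonempty with rfl | ⟨e, he⟩
    · exact ⟨[], by simp, by simp⟩
    · set w := fun j => decide (j ∈ e.2) with hw
      obtain ⟨L, hL, hcov⟩ := ih (E.filter (fun e' => ¬ covers w e'))
        (by
          have hsub : E.filter (fun e' => ¬ covers w e') ⊆ E.erase e := by
            intro x hx
            rw [mem_filter] at hx
            refine mem_erase.mpr ⟨?_, hx.1⟩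
            rintro rfl
            exact hx.2 (cover_one (d := d) _)
          calc (E.filter (fun e' => ¬ covers w e')).card ≤ (E.erase e).card :=
                card_le_card hsub
            _ ≤ k := by rw [card_erase_of_mem he]; omega)
      refine ⟨w :: L, by simp only [List.length_cons]; omega, fun e' he' => ?_⟩
      by_cases hc : covers w e'
      · exact ⟨w, List.mem_cons_self, hc⟩
      · obtain ⟨u, hu, hcu⟩ := hcov e' (mem_filter.mpr ⟨he', hc⟩)
        exact ⟨u, List.mem_cons_of_mem _ hu, hcu⟩

/-- Phase 1 + 2 combined. -/
lemma cover_main {n d : ℕ} (hdn : d ≤ n) :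
    ∀ t : ℕ, ∀ E : Finset (Event n), E ⊆ allEvents n d →
      E.card * (2 ^ d - 1) ^ t ≤ 2 ^ d * (2 ^ d) ^ t →
      ∃ L : List (Fin n → Bool), L.length ≤ t + 2 ^ d ∧ ∀ e ∈ E, ∃ w ∈ L, covers w e := by
  intro t
  induction t with
  | zero =>
    intro E _ hcard
    simp only [pow_zero, mul_one] at hcard
    simpa using cover_by_card (d := d) (2 ^ d) E hcard
  | succ t ih =>
    intro E hEsub hcard
    obtain ⟨w, hw⟩ := greedy_step hdn E hEsub
    set E' := E.filter (fun e => ¬ covers w e) with hE'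
    have hsub' : E' ⊆ allEvents n d := (filter_subset _ _).trans hEsub
    have hcard' : E'.card * (2 ^ d - 1) ^ t ≤ 2 ^ d * (2 ^ d) ^ t := by
      have h2 : 0 < 2 ^ d := Nat.two_pow_pos d
      refine Nat.le_of_mul_le_mul_left ?_ h2
      calc 2 ^ d * (E'.card * (2 ^ d - 1) ^ t)
          = (2 ^ d * E'.card) * (2 ^ d - 1) ^ t := by ring
        _ ≤ ((2 ^ d - 1) * E.card) * (2 ^ d - 1) ^ t := by
            exact Nat.mul_le_mul_right _ hw
        _ = E.card * (2 ^ d - 1) ^ (t + 1) := by ring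
        _ ≤ 2 ^ d * (2 ^ d) ^ (t + 1) := hcard
        _ = 2 ^ d * (2 ^ d * (2 ^ d) ^ t) := by ring
    obtain ⟨L, hL, hcov⟩ := ih E' hsub' hcard'
    refine ⟨w :: L, by simp only [List.length_cons]; omega, fun e he => ?_⟩
    by_cases hc : covers w e
    · exact ⟨w, List.mem_cons_self, hc⟩
    · obtain ⟨u, hu, hcu⟩ := hcov e (mem_filter.mpr ⟨he, hc⟩)
      exact ⟨u, List.mem_cons_of_mem _ hu, hcu⟩

/-! ### From a covering list of rows to a covering array -/

lemma CA_of_list {n d m : ℕ} (L : List (Fin n → Bool)) (hm : L.length ≤ m)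
    (hcov : ∀ e ∈ allEvents n d, ∃ w ∈ L, covers w e) :
    ∃ M : Fin m → Fin n → Bool, IsCoveringArray M d := by
  refine ⟨fun i j => L.getD i.val (fun _ => false) j, ?_⟩
  intro f hf v
  set S := Finset.univ.image f with hS
  set T := ((Finset.univ.filter (fun s => v s = true)).image f) with hT
  have hmem : ((S, T) : Event n) ∈ allEvents n d := by
    refine mem_allEvents.mpr ⟨?_, ?_⟩
    · simp only [hS]
      rw [card_image_of_injective _ hf, card_univ, Fintype.card_fin]
    · exact image_subset_image (filter_subset _ _) |>.trans (by rw [hS])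
  obtain ⟨w, hwL, hw⟩ := hcov _ hmem
  obtain ⟨⟨i, hi⟩, hg⟩ := List.mem_iff_get.mp hwL
  refine ⟨⟨i, lt_of_lt_of_le hi hm⟩, fun s => ?_⟩
  have hrow : (L.getD i (fun _ => false)) = w := by
    rw [List.getD_eq_getElem _ _ hi]
    exact hg
  simp only [hrow]
  have hfs : f s ∈ S := mem_image_of_mem f (mem_univ s)
  have := hw (f s) hfs
  rw [this]
  cases hvs : v s with
  | true =>
    have hmemT : f s ∈ T := mem_image_of_mem f (mem_filter.mpr ⟨mem_univ s, hvs⟩)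
    simp [hmemT]
  | false =>
    have hnT : f s ∉ T := by
      rw [hT]
      simp only [mem_image, mem_filter, not_exists]
      rintro x ⟨⟨-, hx⟩, hfx⟩
      rw [hf hfx] at hx
      rw [hvs] at hx
      exact Bool.false_ne_true hx
    simp [hnT]

/-! ### Covering arrays are decodable -/

lemma decodable_of_CA {m n d : ℕ} (hdn : d ≤ n) (M : Fin m → Fin n → Bool)
    (hM : IsCoveringArray M d) : IsDecodable M d := by
  intro S hSne hScard
  obtain ⟨s₀, hs₀⟩ := hSne
  obtain ⟨S', hSS', hS'⟩ := exists_superset_card_eq hScard (by simp [hdn])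
  have e : {x // x ∈ S'} ≃ Fin d := equivFinOfCardEq hS'
  set f : Fin d → Fin n := fun i => (e.symm i).1 with hf
  have hfinj : Function.Injective f := by
    intro a b hab
    have : e.symm a = e.symm b := Subtype.ext hab
    exact e.symm.injective this
  set v : Fin d → Bool := fun i => decide (f i = s₀) with hv
  obtain ⟨i, hi⟩ := hM f hfinj v
  refine ⟨i, ?_⟩
  have hkey : ∀ j ∈ S', (M i j = true ↔ j = s₀) := by
    intro j hj
    have hj' : f (e ⟨j, hj⟩) = j := by simp [hf]
    have := hi (e ⟨j, hj⟩)
    rw [hj'] at this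
    rw [this, hv]
    simp [hj']
  have : S.filter (fun j => M i j = true) = {s₀} := by
    ext j
    simp only [mem_filter, mem_singleton]
    constructor
    · rintro ⟨hjS, hMj⟩
      exact (hkey j (hSS' hjS)).mp hMj
    · rintro rfl
      exact ⟨hs₀, (hkey _ (hSS' hs₀)).mpr rfl⟩
  rw [this, card_singleton]

/-! ### Explicit construction for strength 2 -/

lemma CA_two (n : ℕ) (hn : 2 ≤ n) :
    ∃ M : Fin (2 * (Nat.clog 2 n + 1)) → Fin n → Bool, IsCoveringArray M 2 := by
  set c := Nat.clog 2 n with hc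
  set L := c + 1 with hL
  set M : Fin (2 * L) → Fin n → Bool :=
    fun i j => xor (Nat.testBit j.val (i.val % L)) (decide (L ≤ i.val)) with hM
  refine ⟨M, ?_⟩
  have hval : ∀ j : Fin n, (j : ℕ) < 2 ^ c := fun j =>
    lt_of_lt_of_le j.2 (Nat.le_pow_clog one_lt_two n)
  have mkrow : ∀ p : ℕ, p < L → ∀ b : Bool, ∃ i : Fin (2 * L),
      ∀ j : Fin n, M i j = xor (Nat.testBit j.val p) b := by
    intro p hp b
    refine ⟨⟨p + cond b L 0, by cases b <;> simp <;> omega⟩, fun j => ?_⟩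
    have h1 : (p + cond b L 0) % L = p := by
      cases b
      · simpa using Nat.mod_eq_of_lt hp
      · simp only [cond_true]
        rw [Nat.add_mod_right]
        exact Nat.mod_eq_of_lt hp
    have h2 : decide (L ≤ p + cond b L 0) = b := by
      cases b <;> simp <;> omega
    simp only [hM, h1, h2]
  intro f hf v
  have hne : (f 0 : ℕ) ≠ (f 1 : ℕ) := by
    intro h
    have : f 0 = f 1 := Fin.ext h
    exact absurd (hf this) (by decide)
  by_cases hv : v 0 = v 1
  · obtain ⟨i, hi⟩ := mkrow c (by omega) (v 0)
    refine ⟨i, ?_⟩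
    rw [Fin.forall_fin_two]
    have htop : ∀ j : Fin n, Nat.testBit j.val c = false := fun j =>
      Nat.testBit_lt_two_pow (hval j)
    constructor
    · rw [hi (f 0), htop]; simp
    · rw [hi (f 1), htop, ← hv]; simp
  · have hex : ∃ p, Nat.testBit (f 0).val p ≠ Nat.testBit (f 1).val p := by
      by_contra hcon
      push_neg at hcon
      exact hne (Nat.eq_of_testBit_eq hcon)
    obtain ⟨p, hp⟩ := hex
    have hpc : p < c := by
      by_contra hpc
      push_neg at hpc
      have h0 : Nat.testBit (f 0).val p = false :=
        Nat.testBit_lt_two_pow (lt_of_lt_of_le (hval (f 0))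
          (Nat.pow_le_pow_right (by norm_num) hpc))
      have h1 : Nat.testBit (f 1).val p = false :=
        Nat.testBit_lt_two_pow (lt_of_lt_of_le (hval (f 1))
          (Nat.pow_le_pow_right (by norm_num) hpc))
      rw [h0, h1] at hp
      exact hp rfl
    obtain ⟨i, hi⟩ := mkrow p (by omega) (xor (Nat.testBit (f 0).val p) (v 0))
    refine ⟨i, ?_⟩
    rw [Fin.forall_fin_two]
    have hv1 : v 1 = !(v 0) := by
      cases h0 : v 0 <;> cases h1 : v 1 <;> simp_all
    have hb1 : Nat.testBit (f 1).val p = !(Nat.testBit (f 0).val p) := by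
      cases h0 : Nat.testBit (f 0).val p <;> cases h1 : Nat.testBit (f 1).val p <;> simp_all
    constructor
    · rw [hi (f 0)]
      cases h0 : Nat.testBit (f 0).val p <;> cases hv0 : v 0 <;> simp_all
    · rw [hi (f 1), hb1, hv1]
      cases h0 : Nat.testBit (f 0).val p <;> cases hv0 : v 0 <;> simp_all

/-! ### Numeric estimates -/

lemma pow43 : ∀ k : ℕ, 4 ^ (k + 2) ≤ 3 ^ (k + 2) * (2 ^ k + 1) := by
  intro k
  induction k with
  | zero => norm_num
  | succ k ih =>
    have h2 : 1 ≤ 2 ^ k := Nat.one_le_two_pow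
    calc 4 ^ (k + 3) = 4 * 4 ^ (k + 2) := by ring
      _ ≤ 4 * (3 ^ (k + 2) * (2 ^ k + 1)) := Nat.mul_le_mul_left 4 ih
      _ = 3 ^ (k + 2) * (4 * (2 ^ k + 1)) := by ring
      _ ≤ 3 ^ (k + 2) * (3 * (2 ^ (k + 1) + 1)) := by
          refine Nat.mul_le_mul_left _ ?_
          have : 2 ^ (k + 1) = 2 * 2 ^ k := by ring
          omega
      _ = 3 ^ (k + 3) * (2 ^ (k + 1) + 1) := by ring

lemma clog_ineq (n : ℕ) (hn : 2 ≤ n) :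
    4 ^ (Nat.clog 2 n + 1) ≤ 3 ^ (Nat.clog 2 n + 1) * n := by
  have hc1 : 1 ≤ Nat.clog 2 n := Nat.clog_pos one_lt_two hn
  have hlow : 2 ^ (Nat.clog 2 n - 1) < n := by
    have := Nat.pow_pred_clog_lt_self one_lt_two (x := n) hn
    simpa [Nat.pred_eq_sub_one] using this
  generalize hg : Nat.clog 2 n = c at hc1 hlow ⊢
  obtain ⟨k, rfl⟩ : ∃ k, c = k + 1 := ⟨c - 1, by omega⟩
  have := pow43 k
  have hk : 2 ^ k + 1 ≤ n := by simpa using hlow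
  calc 4 ^ (k + 2) ≤ 3 ^ (k + 2) * (2 ^ k + 1) := this
    _ ≤ 3 ^ (k + 2) * n := Nat.mul_le_mul_left _ hk

lemma bound_two (n : ℕ) (hn : 2 ≤ n) :
    (2 * (Nat.clog 2 n + 1) : ℝ) ≤ 2 * Real.logb 2 n / Real.logb 2 ((4:ℝ) / 3) := by
  set c := Nat.clog 2 n with hc
  have hlog43 : 0 < Real.log ((4:ℝ)/3) := Real.log_pos (by norm_num)
  have hlog2 : 0 < Real.log 2 := Real.log_pos one_lt_two
  have hrhs : 2 * Real.logb 2 n / Real.logb 2 ((4:ℝ)/3)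
      = 2 * Real.log n / Real.log ((4:ℝ)/3) := by
    unfold Real.logb
    field_simp
  rw [hrhs, le_div_iff₀ hlog43]
  have hkey : ((4:ℝ)/3) ^ (c + 1) ≤ (n : ℝ) := by
    have hN : (4:ℝ) ^ (c+1) ≤ 3 ^ (c+1) * n := by
      have := clog_ineq n hn
      have := (Nat.cast_le (α := ℝ)).mpr this
      push_cast at this
      convert this using 2
    rw [div_pow, div_le_iff₀ (by positivity)]
    calc (4:ℝ)^(c+1) ≤ 3^(c+1) * n := hN
      _ = (n:ℝ) * 3^(c+1) := by ring
  have hlogkey : (c + 1 : ℝ) * Real.log ((4:ℝ)/3) ≤ Real.log n := by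
    have := Real.log_le_log (by positivity) hkey
    rw [Real.log_pow] at this
    push_cast at this
    exact this
  push_cast at hlogkey ⊢
  nlinarith [hlogkey]

lemma choose_dfac_le (n d : ℕ) : n.choose d * d.factorial ≤ n ^ d := by
  rw [mul_comm, ← Nat.descFactorial_eq_factorial_mul_choose]
  exact Nat.descFactorial_le_pow n d

lemma core_ineq {n d : ℕ} (hd3 : 3 ≤ d) (hdn : d ≤ n) :
    (n.choose d : ℝ) * ((2 ^ d : ℝ) / ((2 : ℝ) ^ d - 1)) ^ (2 ^ d + 1) ≤ (n : ℝ) ^ d := by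
  have h8 : (8 : ℝ) ≤ (2:ℝ) ^ d := by
    calc (8:ℝ) = 2 ^ 3 := by norm_num
      _ ≤ 2 ^ d := by apply pow_le_pow_right₀ (by norm_num) hd3
  have hpos : (0:ℝ) < (2:ℝ) ^ d - 1 := by linarith
  set r : ℝ := (2 ^ d : ℝ) / ((2 : ℝ) ^ d - 1) with hrdef
  have hr : r = 1 + 1 / ((2:ℝ)^d - 1) := by
    rw [hrdef]
    field_simp
    ring
  have hr0 : 0 ≤ r := by rw [hr]; positivity
  have hrexp : r ≤ Real.exp (1 / ((2:ℝ)^d - 1)) := by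
    rw [hr]
    have := Real.add_one_le_exp (1 / ((2:ℝ)^d - 1))
    linarith
  have hrpow : r ^ (2^d + 1) ≤ Real.exp (((2^d + 1 : ℕ) : ℝ) / ((2:ℝ)^d - 1)) := by
    calc r ^ (2^d+1) ≤ Real.exp (1 / ((2:ℝ)^d - 1)) ^ (2^d+1) :=
          pow_le_pow_left₀ hr0 hrexp _
      _ = Real.exp (((2^d + 1 : ℕ) : ℝ) * (1 / ((2:ℝ)^d - 1))) := by
          rw [Real.exp_nat_mul]
      _ = Real.exp (((2^d + 1 : ℕ) : ℝ) / ((2:ℝ)^d - 1)) := by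
          rw [mul_one_div]
  have hfrac : ((2^d + 1 : ℕ) : ℝ) / ((2:ℝ)^d - 1) ≤ 2 * Real.log 2 := by
    have hc : ((2^d + 1 : ℕ) : ℝ) = (2:ℝ)^d + 1 := by push_cast; ring
    rw [hc, div_le_iff₀ hpos]
    have hlog2 := Real.log_two_gt_d9
    nlinarith
  have hexp4 : Real.exp (2 * Real.log 2) = 4 := by
    rw [two_mul, Real.exp_add, Real.exp_log (by norm_num : (0:ℝ) < 2)]
    norm_num
  have hr4 : r ^ (2^d + 1) ≤ 4 := by
    calc r ^ (2^d+1) ≤ Real.exp (((2^d + 1 : ℕ) : ℝ) / ((2:ℝ)^d - 1)) := hrpow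
      _ ≤ Real.exp (2 * Real.log 2) := Real.exp_le_exp.mpr hfrac
      _ = 4 := hexp4
  have hfac : (4:ℝ) ≤ (d.factorial : ℝ) := by
    have h6 : 6 ≤ d.factorial := by
      calc 6 = Nat.factorial 3 := by norm_num [Nat.factorial]
        _ ≤ d.factorial := Nat.factorial_le hd3
    have h6' := (Nat.cast_le (α := ℝ)).mpr h6
    push_cast at h6'
    linarith
  have hcf : (n.choose d : ℝ) * (d.factorial : ℝ) ≤ (n:ℝ) ^ d := by
    have := choose_dfac_le n d
    exact_mod_cast this
  have hC0 : (0:ℝ) ≤ (n.choose d : ℝ) := by positivity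
  calc (n.choose d : ℝ) * r ^ (2^d+1) ≤ (n.choose d : ℝ) * 4 := by
        exact mul_le_mul_of_nonneg_left hr4 hC0
    _ ≤ (n.choose d : ℝ) * (d.factorial : ℝ) := mul_le_mul_of_nonneg_left hfac hC0
    _ ≤ (n:ℝ) ^ d := hcf

lemma bound_three {n d : ℕ} (hn : 2 ≤ n) (hd3 : 3 ≤ d) (hdn : d ≤ n) :
    ∃ t : ℕ, n.choose d * (2 ^ d - 1) ^ t ≤ (2 ^ d) ^ t ∧
      ((t + 2 ^ d : ℕ) : ℝ) ≤ d * Real.logb 2 n /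
        Real.logb 2 ((2 ^ d : ℝ) / ((2 : ℝ) ^ d - 1)) := by
  have h8 : (8 : ℝ) ≤ (2:ℝ) ^ d := by
    calc (8:ℝ) = 2 ^ 3 := by norm_num
      _ ≤ 2 ^ d := by apply pow_le_pow_right₀ (by norm_num) hd3
  have hpos : (0:ℝ) < (2:ℝ) ^ d - 1 := by linarith
  set r : ℝ := (2 ^ d : ℝ) / ((2 : ℝ) ^ d - 1) with hrdef
  have hr1 : 1 < r := by
    rw [hrdef, lt_div_iff₀ hpos]
    linarith
  have hr0 : (0:ℝ) < r := by linarith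
  have hlogr : 0 < Real.log r := Real.log_pos hr1
  have hlog2 : (0:ℝ) < Real.log 2 := Real.log_pos one_lt_two
  have hC1 : 1 ≤ n.choose d := Nat.choose_pos hdn
  have hC0 : (0:ℝ) < (n.choose d : ℝ) := by exact_mod_cast hC1
  have hlogC0 : 0 ≤ Real.log (n.choose d) := Real.log_nonneg (by exact_mod_cast hC1)
  set x : ℝ := Real.log (n.choose d) / Real.log r with hx
  have hx0 : 0 ≤ x := div_nonneg hlogC0 hlogr.le
  set t : ℕ := ⌈x⌉₊ with ht
  refine ⟨t, ?_, ?_⟩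
  · have hxt : x ≤ (t : ℝ) := Nat.le_ceil x
    have hlogle : Real.log (n.choose d) ≤ (t : ℝ) * Real.log r := by
      rw [hx, div_le_iff₀ hlogr] at hxt
      linarith
    have hCr : (n.choose d : ℝ) ≤ r ^ t := by
      calc (n.choose d : ℝ) = Real.exp (Real.log (n.choose d)) := (Real.exp_log hC0).symm
        _ ≤ Real.exp ((t:ℝ) * Real.log r) := Real.exp_le_exp.mpr hlogle
        _ = Real.exp (Real.log r) ^ t := by rw [Real.exp_nat_mul]
        _ = r ^ t := by rw [Real.exp_log hr0]
    have hreal : (n.choose d : ℝ) * ((2:ℝ)^d - 1) ^ t ≤ ((2:ℝ)^d) ^ t := by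
      have hmul := mul_le_mul_of_nonneg_right hCr
        (by positivity : (0:ℝ) ≤ ((2:ℝ)^d - 1) ^ t)
      calc (n.choose d : ℝ) * ((2:ℝ)^d - 1) ^ t ≤ r ^ t * ((2:ℝ)^d - 1) ^ t := hmul
        _ = ((2:ℝ)^d) ^ t := by
            rw [hrdef, div_pow, div_mul_eq_mul_div, mul_div_assoc, div_self (by positivity),
              mul_one]
    have hcast : ((2^d - 1 : ℕ) : ℝ) = (2:ℝ)^d - 1 := by
      have : 1 ≤ 2^d := Nat.one_le_two_pow
      push_cast [this]
      ring
    rw [← Nat.cast_le (α := ℝ)]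
    push_cast [hcast]
    convert hreal using 2 <;> push_cast <;> ring
  · have htle : (t : ℝ) ≤ x + 1 := le_of_lt (Nat.ceil_lt_add_one hx0)
    have hrhs : (d : ℝ) * Real.logb 2 n / Real.logb 2 r
        = (d : ℝ) * Real.log n / Real.log r := by
      unfold Real.logb
      field_simp
    rw [hrhs, le_div_iff₀ hlogr]
    have hcore := core_ineq hd3 hdn
    have hlogcore : Real.log (n.choose d) + ((2^d + 1 : ℕ) : ℝ) * Real.log r
        ≤ (d : ℝ) * Real.log n := by
      have hl := Real.log_le_log (by positivity) hcore
      rw [Real.log_mul (ne_of_gt hC0) (by positivity), Real.log_pow, Real.log_pow] at hl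
      rw [hrdef]
      exact hl
    have hxlog : x * Real.log r = Real.log (n.choose d) := by
      rw [hx, div_mul_cancel₀ _ (ne_of_gt hlogr)]
    push_cast
    calc ((t:ℝ) + (2:ℝ)^d) * Real.log r ≤ (x + 1 + ((2:ℝ)^d)) * Real.log r := by
          apply mul_le_mul_of_nonneg_right _ hlogr.le
          push_cast
          linarith
      _ = x * Real.log r + ((2:ℝ)^d + 1) * Real.log r := by ring
      _ = Real.log (n.choose d) + ((2:ℝ)^d + 1) * Real.log r := by rw [hxlog]
      _ ≤ (d : ℝ) * Real.log n := by
          have : ((2^d + 1 : ℕ) : ℝ) = (2:ℝ)^d + 1 := by push_cast; ring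
          rw [← this]
          exact hlogcore

end CAaux

theorem covering_array_exists (n d : ℕ) (hn : 2 ≤ n) (hd2 : 2 ≤ d) (hdn : d ≤ n) :
    (∃ m : ℕ, (m : ℝ) ≤ d * Real.logb 2 n /
        Real.logb 2 ((2 ^ d : ℝ) / ((2 : ℝ) ^ d - 1)) ∧
      ∃ M : Fin m → Fin n → Bool, IsCoveringArray M d) ∧
    (mStar n d : ℝ) ≤ d * Real.logb 2 n /
        Real.logb 2 ((2 ^ d : ℝ) / ((2 : ℝ) ^ d - 1)) := by
  classical
  have key : ∃ m : ℕ, (m : ℝ) ≤ d * Real.logb 2 n /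
      Real.logb 2 ((2 ^ d : ℝ) / ((2 : ℝ) ^ d - 1)) ∧
      ∃ M : Fin m → Fin n → Bool, IsCoveringArray M d := by
    by_cases hd3 : 3 ≤ d
    · obtain ⟨t, hnat, hreal⟩ := CAaux.bound_three hn hd3 hdn
      have hcard : (CAaux.allEvents n d).card * (2 ^ d - 1) ^ t ≤ 2 ^ d * (2 ^ d) ^ t := by
        rw [CAaux.card_allEvents]
        calc n.choose d * 2 ^ d * (2 ^ d - 1) ^ t
            = 2 ^ d * (n.choose d * (2 ^ d - 1) ^ t) := by ring
          _ ≤ 2 ^ d * (2 ^ d) ^ t := Nat.mul_le_mul_left _ hnat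
      obtain ⟨L, hlen, hcov⟩ := CAaux.cover_main hdn t (CAaux.allEvents n d)
        (subset_refl _) hcard
      obtain ⟨M, hM⟩ := CAaux.CA_of_list (m := t + 2 ^ d) L hlen hcov
      exact ⟨t + 2 ^ d, hreal, M, hM⟩
    · have hd2' : d = 2 := by omega
      subst hd2'
      obtain ⟨M, hM⟩ := CAaux.CA_two n hn
      refine ⟨2 * (Nat.clog 2 n + 1), ?_, M, hM⟩
      have hb := CAaux.bound_two n hn
      have hconv : ((2:ℕ) : ℝ) * Real.logb 2 n / Real.logb 2 ((2 ^ 2 : ℝ) / ((2 : ℝ) ^ 2 - 1))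
          = 2 * Real.logb 2 n / Real.logb 2 ((4:ℝ) / 3) := by norm_num
      rw [hconv]
      exact_mod_cast hb
  obtain ⟨m, hle, M, hM⟩ := key
  refine ⟨⟨m, hle, M, hM⟩, ?_⟩
  have hmem : m ∈ {m | ∃ M : Fin m → Fin n → Bool, IsDecodable M d} :=
    ⟨M, CAaux.decodable_of_CA hdn M hM⟩
  have hms : mStar n d ≤ m := Nat.sInf_le hmem
  calc (mStar n d : ℝ) ≤ (m : ℝ) := by exact_mod_cast hms
    _ ≤ _ := hle
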